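/- For every extended Young diagram Y of charge n and all integers j, k, the Fock-space operators satisfy e_k^∞ e_j^∞ e_k^∞ Y = 0. -/

import Mathlib

noncomputable section
open scoped Classical

abbrev K : Type := FractionRing (MvPolynomial (Fin 2) ℚ)

def rr : K := algebraMap (MvPolynomial (Fin 2) ℚ) K (MvPolynomial.X 0)
def ss : K := algebraMap (MvPolynomial (Fin 2) ℚ) K (MvPolynomial.X 1)

/-- An extended Young diagram of charge `n`: a weakly increasing integer sequence
eventually equal to `n`. -/
structure EYD (n : ℤ) where
  y : ℕ → ℤ
  mono : ∀ k, y k ≤ y (k + 1)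
  charge : ∃ N, ∀ k, N ≤ k → y k = n

namespace EYD

variable {n : ℤ}

/-- `Y` has a convex corner on diagonal `i` at column `k`. -/
def ConvexAt (Y : EYD n) (i : ℤ) (k : ℕ) : Prop :=
  Y.y k < Y.y (k + 1) ∧ Y.y k + k + 1 = i

/-- `Y` has a concave corner on diagonal `i` at column `k`. -/
def ConcaveAt (Y : EYD n) (i : ℤ) (k : ℕ) : Prop :=
  (k = 0 ∨ ∃ j, k = j + 1 ∧ Y.y j < Y.y k) ∧ Y.y k + k = i

/-- Replace the convex corner at column `k` by a concave one. -/
def up (Y : EYD n) (k : ℕ) (h : Y.y k < Y.y (k + 1)) : EYD n where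
  y := Function.update Y.y k (Y.y k + 1)
  mono := by
    intro m
    rcases eq_or_ne m k with rfl | h1
    · rw [Function.update_self, Function.update_of_ne (show m + 1 ≠ m by omega)]
      omega
    · rcases eq_or_ne (m + 1) k with h2 | h2
      · have hm := Y.mono m
        rw [Function.update_of_ne h1, h2, Function.update_self, ← h2]
        omega
      · rw [Function.update_of_ne h1, Function.update_of_ne h2]
        exact Y.mono m
  charge := by
    obtain ⟨N, hN⟩ := Y.charge
    exact ⟨max N (k + 1), fun m hm => by
      rw [Function.update_of_ne (show m ≠ k by omega)]
      exact hN m (by omega)⟩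

/-- Replace the concave corner at column `k` by a convex one. -/
def down (Y : EYD n) (k : ℕ) (h : k = 0 ∨ ∃ j, k = j + 1 ∧ Y.y j < Y.y k) : EYD n where
  y := Function.update Y.y k (Y.y k - 1)
  mono := by
    intro m
    rcases eq_or_ne m k with rfl | h1
    · rw [Function.update_self, Function.update_of_ne (show m + 1 ≠ m by omega)]
      have := Y.mono m
      omega
    · rcases eq_or_ne (m + 1) k with h2 | h2
      · rw [Function.update_of_ne h1, h2, Function.update_self]
        rcases h with h | ⟨j, hj, hjy⟩
        · omega
        · have : j = m := by omega
          subst this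
          omega
      · rw [Function.update_of_ne h1, Function.update_of_ne h2]
        exact Y.mono m
  charge := by
    obtain ⟨N, hN⟩ := Y.charge
    exact ⟨max N (k + 1), fun m hm => by
      rw [Function.update_of_ne (show m ≠ k by omega)]
      exact hN m (by omega)⟩

/-- The action of `e_i^∞` on a diagram: turn the convex corner on diagonal `i`
into a concave one, if any. -/
def eAct (i : ℤ) (Y : EYD n) : Option (EYD n) :=
  if h : ∃ k, Y.ConvexAt i k then some (Y.up h.choose h.choose_spec.1) else none

/-- The action of `f_i^∞` on a diagram: turn the concave corner on diagonal `i`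
into a convex one, if any. -/
def fAct (i : ℤ) (Y : EYD n) : Option (EYD n) :=
  if h : ∃ k, Y.ConcaveAt i k then some (Y.down h.choose h.choose_spec.1) else none

end EYD

/-- The Fock space of charge `n`. -/
abbrev Fock (n : ℤ) : Type := EYD n →₀ K

def ovec {n : ℤ} (o : Option (EYD n)) : Fock n :=
  o.elim 0 fun Y => Finsupp.single Y 1

/-- The linear operator on Fock space induced by a partially defined map on diagrams. -/
def opOf {n : ℤ} (a : EYD n → Option (EYD n)) : Fock n →ₗ[K] Fock n :=
  Finsupp.lsum K fun Y => LinearMap.smulRight (LinearMap.id : K →ₗ[K] K) (ovec (a Y))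

/-- A diagonal operator on Fock space. -/
def diagOp {n : ℤ} (c : EYD n → K) : Fock n →ₗ[K] Fock n :=
  Finsupp.lsum K fun Y => LinearMap.smulRight (LinearMap.id : K →ₗ[K] K) (c Y • Finsupp.single Y 1)

def Eop (n i : ℤ) : Fock n →ₗ[K] Fock n := opOf (EYD.eAct i)
def Fop (n i : ℤ) : Fock n →ₗ[K] Fock n := opOf (EYD.fAct i)

namespace EYD

variable {n : ℤ}

lemma y_mono_le (Y : EYD n) : Monotone Y.y := monotone_nat_of_le_succ Y.mono

lemma g_le (Y : EYD n) {m m' : ℕ} (h : m ≤ m') : Y.y m + m ≤ Y.y m' + m' := by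
  have := Y.y_mono_le h
  omega

lemma g_lt (Y : EYD n) {m m' : ℕ} (h : m < m') : Y.y m + m < Y.y m' + m' := by
  have h1 := Y.mono m
  have h2 := Y.y_mono_le (show m + 1 ≤ m' from h)
  omega

lemma g_inj (Y : EYD n) {m m' : ℕ} (h : Y.y m + m = Y.y m' + m') : m = m' := by
  rcases lt_trichotomy m m' with h' | h' | h'
  · exact absurd h (by have := Y.g_lt h'; omega)
  · exact h'
  · exact absurd h (by have := Y.g_lt h'; omega)

lemma convex_unique {Y : EYD n} {i : ℤ} {c c' : ℕ} (h : Y.ConvexAt i c)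
    (h' : Y.ConvexAt i c') : c = c' :=
  Y.g_inj (by have := h.2; have := h'.2; omega)

lemma up_y (Y : EYD n) (c : ℕ) (h) (m : ℕ) :
    (Y.up c h).y m = if m = c then Y.y c + 1 else Y.y m := by
  simp [up, Function.update_apply]

lemma no_convex_up {Y : EYD n} {k : ℤ} {c : ℕ} (hc : Y.ConvexAt k c) (h) (m : ℕ) :
    ¬ (Y.up c h).ConvexAt k m := by
  rintro ⟨hlt, hdiag⟩
  rw [up_y, up_y] at hlt
  rw [up_y] at hdiag
  have hk := hc.2
  rcases eq_or_ne m c with rfl | h1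
  · rw [if_pos rfl] at hdiag
    omega
  · rw [if_neg h1] at hdiag
    rcases eq_or_ne (m + 1) c with h2 | h2
    · have hm : Y.y m ≤ Y.y c := by
        rw [← h2]; exact Y.mono m
      omega
    · rw [if_neg h1, if_neg h2] at hlt
      exact h1 (convex_unique ⟨hlt, hdiag⟩ hc)

lemma concave_up {Y : EYD n} {k : ℤ} {c : ℕ} (hc : Y.ConvexAt k c) (h) :
    (Y.up c h).ConcaveAt k c := by
  refine ⟨?_, ?_⟩
  · by_cases h0 : c = 0
    · exact Or.inl h0
    · refine Or.inr ⟨c - 1, (by omega), ?_⟩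
      rw [up_y, up_y, if_neg (by omega), if_pos rfl]
      have := Y.y_mono_le (Nat.sub_le c 1)
      omega
  · rw [up_y, if_pos rfl]
    have := hc.2
    omega

lemma no_convex_up2 {Y : EYD n} {k : ℤ} {c : ℕ}
    (hnc : ∀ m, ¬ Y.ConvexAt k m) (hcc : Y.ConcaveAt k c)
    {c' : ℕ} (h' : Y.y c' < Y.y (c' + 1)) (m : ℕ) :
    ¬ (Y.up c' h').ConvexAt k m := by
  rintro ⟨hlt, hdiag⟩
  rw [up_y, up_y] at hlt
  rw [up_y] at hdiag
  have hk := hcc.2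
  rcases eq_or_ne m c' with heq | h1
  · rw [if_pos heq] at hdiag
    rw [if_pos heq, if_neg (by omega)] at hlt
    have hy : Y.y (m + 1) = Y.y (c' + 1) := by rw [heq]
    have hlt2 : c' < c := by
      by_contra hge
      have := Y.g_le (show c ≤ c' by omega)
      omega
    have h3 := Y.g_le (show c' + 1 ≤ c from hlt2)
    omega
  · rw [if_neg h1] at hdiag
    rcases eq_or_ne (m + 1) c' with h2 | h2
    · rw [if_neg h1, if_pos h2] at hlt
      rcases lt_or_eq_of_le (Y.mono m) with hm | hm
      · exact hnc m ⟨hm, hdiag⟩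
      · have hceq : c' = c := by
          apply Y.g_inj
          rw [← h2]
          push_cast
          omega
        have hcm : c = m + 1 := by omega
        subst hcm
        rcases hcc.1 with h0 | ⟨j, hj, hjy⟩
        · omega
        · have : j = m := by omega
          subst this
          omega
    · rw [if_neg h1, if_neg h2] at hlt
      exact hnc m ⟨hlt, hdiag⟩

end EYD

lemma opOf_single {n : ℤ} (a : EYD n → Option (EYD n)) (Y : EYD n) :
    opOf a (Finsupp.single Y 1) = ovec (a Y) := by
  simp [opOf]

lemma ovec_some {n : ℤ} (Y : EYD n) : ovec (some Y) = Finsupp.single Y 1 := rfl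

lemma ovec_none {n : ℤ} : ovec (none : Option (EYD n)) = 0 := rfl

/-- For all integers `j, k` and every extended Young diagram `Y`,
`e_k^∞ e_j^∞ e_k^∞ Y = 0`. -/
theorem stmt_15 (n j k : ℤ) (Y : EYD n) :
    Eop n k (Eop n j (Eop n k (Finsupp.single Y 1))) = 0 := by
  rw [Eop, opOf_single, EYD.eAct]
  by_cases h : ∃ c, Y.ConvexAt k c
  · rw [dif_pos h, ovec_some]
    have hnc1 : ∀ m, ¬ (Y.up h.choose h.choose_spec.1).ConvexAt k m :=
      EYD.no_convex_up h.choose_spec _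
    have hcc1 : (Y.up h.choose h.choose_spec.1).ConcaveAt k h.choose :=
      EYD.concave_up h.choose_spec _
    set Y1 := Y.up h.choose h.choose_spec.1 with hY1
    rw [Eop, opOf_single, EYD.eAct]
    by_cases h2 : ∃ c, Y1.ConvexAt j c
    · rw [dif_pos h2, ovec_some]
      have hnc2 : ∀ m, ¬ (Y1.up h2.choose h2.choose_spec.1).ConvexAt k m :=
        EYD.no_convex_up2 hnc1 hcc1 h2.choose_spec.1
      rw [opOf_single, EYD.eAct,
        dif_neg (by rintro ⟨c, hc⟩; exact hnc2 c hc), ovec_none]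
    · rw [dif_neg h2, ovec_none, map_zero]
  · rw [dif_neg h, ovec_none, map_zero, map_zero]
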